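/- arXiv:0805.4502 — 2 statements merged into one kernel-verified Lean document; each statement's English description precedes it below -/
import Mathlib

section
/- Every nonzero codeword X of the Golden Code 𝒢 satisfies |det(X)|² ≥ 1/5, with the bound attained. -/
open Matrix

/-- The golden number θ = (1+√5)/2, as a complex number. -/
noncomputable def gold : ℂ := (1 + Real.sqrt 5) / 2

/-- Squared Frobenius norm of a 2×2 complex matrix. -/
noncomputable def fro2 (M : Matrix (Fin 2) (Fin 2) ℂ) : ℝ :=
  ∑ i, ∑ j, ‖M i j‖ ^ 2

/-- The element `a + bθ + i(c + dθ)` of `ℤ[i,θ]`. -/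
noncomputable def zit (a b c d : ℤ) : ℂ :=
  (a : ℂ) + b * gold + Complex.I * ((c : ℂ) + d * gold)

/-- Its conjugate under `θ ↦ 1 − θ`. -/
noncomputable def zitBar (a b c d : ℤ) : ℂ :=
  (a : ℂ) + b * (1 - gold) + Complex.I * ((c : ℂ) + d * (1 - gold))

/-- The matrix `[[w₁, w₂], [i·w̄₂, w̄₁]]` of the order `𝒪`, with
`w₁ = a + bθ + i(c+dθ)` and `w₂ = e + fθ + i(g+hθ)`. -/
noncomputable def Omat (a b c d e f g h : ℤ) : Matrix (Fin 2) (Fin 2) ℂ :=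
  !![zit a b c d, zit e f g h;
     Complex.I * zitBar e f g h, zitBar a b c d]

/-- Membership in the order `𝒪`. -/
def inO (W : Matrix (Fin 2) (Fin 2) ℂ) : Prop :=
  ∃ a b c d e f g h : ℤ, W = Omat a b c d e f g h

/-- `α = 1 + i·θ̄ = 1 + i(1−θ)`. -/
noncomputable def alphaG : ℂ := 1 + Complex.I * (1 - gold)

/-- `ᾱ = 1 + i·θ`. -/
noncomputable def alphaBarG : ℂ := 1 + Complex.I * gold

/-- `A = diag(α, ᾱ)`. -/
noncomputable def Amat : Matrix (Fin 2) (Fin 2) ℂ := !![alphaG, 0; 0, alphaBarG]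

/-- Membership in the Golden Code `𝒢 = (1/√5)·A·𝒪`. -/
def inG (X : Matrix (Fin 2) (Fin 2) ℂ) : Prop :=
  ∃ W, inO W ∧ X = ((Real.sqrt 5 : ℂ))⁻¹ • (Amat * W)

/-! ### Auxiliary machinery -/

/-- Real part of the relative norm `w·w̄`. -/
def Pq (a b c d : ℤ) : ℤ := a^2 + a*b - b^2 - c^2 - c*d + d^2

/-- Imaginary part of the relative norm `w·w̄`. -/
def Qq (a b c d : ℤ) : ℤ := 2*a*c + a*d + b*c - 2*b*d

lemma sqrt5_sq : (Real.sqrt 5 : ℂ) * (Real.sqrt 5 : ℂ) = 5 := by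
  rw [← Complex.ofReal_mul, Real.mul_self_sqrt (by norm_num : (0:ℝ) ≤ 5)]
  norm_num

lemma goldSq : gold * gold = gold + 1 := by
  unfold gold; linear_combination sqrt5_sq/4

lemma zmul (a b c d : ℤ) :
    zit a b c d * zitBar a b c d = (Pq a b c d : ℂ) + (Qq a b c d : ℂ) * Complex.I := by
  unfold zit zitBar Pq Qq
  push_cast
  linear_combination (-(b:ℂ)^2 - 2*Complex.I*b*d - Complex.I^2*d^2) * goldSq
    + ((c:ℂ)^2 + c*d - d^2) * Complex.I_mul_I

lemma alpha_mul : alphaG * alphaBarG = 2 + Complex.I := by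
  unfold alphaG alphaBarG
  linear_combination (-Complex.I^2) * goldSq + (-1 : ℂ) * Complex.I_mul_I

lemma int_complex_eq {x y z w : ℤ} (h : (x:ℂ) + (y:ℂ) * Complex.I = (z:ℂ) + (w:ℂ) * Complex.I) :
    x = z ∧ y = w := by
  have hre := congrArg Complex.re h
  have him := congrArg Complex.im h
  simp [Complex.add_re, Complex.add_im] at hre him
  exact ⟨by exact_mod_cast hre, by exact_mod_cast him⟩

lemma lin0 {a b : ℤ} (h : (a:ℝ) + (b:ℝ) * Real.sqrt 5 = 0) : a = 0 ∧ b = 0 := by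
  have hirr : Irrational (Real.sqrt 5) := by
    have := (by norm_num : Nat.Prime 5).irrational_sqrt
    simpa using this
  by_cases hb : b = 0
  · subst hb; simp at h; exact ⟨by exact_mod_cast h, rfl⟩
  · exfalso
    apply hirr
    refine ⟨(-a : ℚ)/(b : ℚ), ?_⟩
    have hbR : (b:ℝ) ≠ 0 := Int.cast_ne_zero.mpr hb
    push_cast
    field_simp
    linarith

lemma gold_ofReal : gold = ((1 + Real.sqrt 5) / 2 : ℝ) := by
  unfold gold; push_cast; ring

lemma zit_eq_zero {a b c d : ℤ} (h : zit a b c d = 0) :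
    a = 0 ∧ b = 0 ∧ c = 0 ∧ d = 0 := by
  have hre := congrArg Complex.re h
  have him := congrArg Complex.im h
  rw [zit, gold_ofReal] at hre him
  simp [Complex.add_re, Complex.add_im, Complex.mul_re, Complex.mul_im] at hre him
  have h1 : ((2*a+b : ℤ) : ℝ) + (b:ℝ) * Real.sqrt 5 = 0 := by push_cast; linarith
  have h2 : ((2*c+d : ℤ) : ℝ) + (d:ℝ) * Real.sqrt 5 = 0 := by push_cast; linarith
  obtain ⟨e1, e2⟩ := lin0 h1
  obtain ⟨e3, e4⟩ := lin0 h2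
  refine ⟨by omega, by omega, by omega, by omega⟩

lemma zitBar_eq_zero {a b c d : ℤ} (h : zitBar a b c d = 0) :
    a = 0 ∧ b = 0 ∧ c = 0 ∧ d = 0 := by
  have hre := congrArg Complex.re h
  have him := congrArg Complex.im h
  rw [zitBar, gold_ofReal] at hre him
  simp [Complex.add_re, Complex.add_im, Complex.mul_re, Complex.mul_im, Complex.sub_re,
    Complex.sub_im] at hre him
  have h1 : ((2*a+b : ℤ) : ℝ) + ((-b : ℤ):ℝ) * Real.sqrt 5 = 0 := by push_cast; linarith
  have h2 : ((2*c+d : ℤ) : ℝ) + ((-d : ℤ):ℝ) * Real.sqrt 5 = 0 := by push_cast; linarith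
  obtain ⟨e1, e2⟩ := lin0 h1
  obtain ⟨e3, e4⟩ := lin0 h2
  refine ⟨by omega, by omega, by omega, by omega⟩

lemma PQ_zero {a b c d : ℤ} (hP : Pq a b c d = 0) (hQ : Qq a b c d = 0) :
    a = 0 ∧ b = 0 ∧ c = 0 ∧ d = 0 := by
  have h : zit a b c d * zitBar a b c d = 0 := by
    rw [zmul, hP, hQ]; simp
  rcases mul_eq_zero.mp h with h' | h'
  · exact zit_eq_zero h'
  · exact zitBar_eq_zero h'

lemma one_le_sq_add_sq {x y : ℤ} (h : ¬(x = 0 ∧ y = 0)) : 1 ≤ x^2 + y^2 := by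
  rcases not_and_or.mp h with hx | hx
  · nlinarith [Int.one_le_abs (show x ≠ 0 from hx), sq_nonneg y, sq_abs x, sq_nonneg (|x| - 1)]
  · nlinarith [Int.one_le_abs (show y ≠ 0 from hx), sq_nonneg x, sq_abs y, sq_nonneg (|y| - 1)]

/-- The mod-5 step: if `N(w₁) = i·N(w₂)` (as the two integer equations), then
`5 ∣ s₁` and `5 ∣ s₂` for the trace-like linear forms. -/
lemma mod5_step {a b c d e f g h : ℤ}
    (h1 : Pq a b c d + Qq e f g h = 0) (h2 : Qq a b c d - Pq e f g h = 0) :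
    (5:ℤ) ∣ (a + 3*b + 3*c + 9*d) ∧ (5:ℤ) ∣ (e + 3*f + 3*g + 9*h) := by
  have c1 : ((Pq a b c d : ZMod 5) + (Qq e f g h : ZMod 5)) = 0 := by
    exact_mod_cast congrArg (Int.cast : ℤ → ZMod 5) h1
  have c2 : ((Qq a b c d : ZMod 5) - (Pq e f g h : ZMod 5)) = 0 := by
    exact_mod_cast congrArg (Int.cast : ℤ → ZMod 5) h2
  have h50 : (5 : ZMod 5) = 0 := by decide
  have hz : ((a : ZMod 5) + 3*b + 3*c + 9*d)^2 = 3 * ((e : ZMod 5) + 3*f + 3*g + 9*h)^2 := by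
    unfold Pq Qq at c1 c2
    push_cast at c1 c2
    linear_combination c1 + 3*c2 +
      ((a:ZMod 5)*b + 2*b^2 + 3*b*c + 2*c^2 + 3*a*d + 12*b*d + 11*c*d + 16*d^2
        - 3*e*f - 6*f^2 - 4*e*g - 11*f*g - 6*g^2 - 11*e*h - 32*f*h - 33*g*h - 48*h^2) * h50
  have key5 : ∀ x y : ZMod 5, x^2 = 3*y^2 → x = 0 ∧ y = 0 := by decide
  have := key5 _ _ hz
  constructor
  · have := this.1
    rw [show ((a : ZMod 5) + 3*b + 3*c + 9*d) = ((a + 3*b + 3*c + 9*d : ℤ) : ZMod 5) by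
      push_cast; ring] at this
    exact (ZMod.intCast_zmod_eq_zero_iff_dvd _ 5).mp this
  · have := this.2
    rw [show ((e : ZMod 5) + 3*f + 3*g + 9*h) = ((e + 3*f + 3*g + 9*h : ℤ) : ZMod 5) by
      push_cast; ring] at this
    exact (ZMod.intCast_zmod_eq_zero_iff_dvd _ 5).mp this

/-- Division by α in coordinates: one descent step for a single quadruple. -/
lemma alpha_descent {a b c d : ℤ} (hs : (5:ℤ) ∣ (a + 3*b + 3*c + 9*d)) :
    ∃ a' b' c' d' : ℤ,
      Pq a b c d = 2 * Pq a' b' c' d' - Qq a' b' c' d' ∧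
      Qq a b c d = Pq a' b' c' d' + 2 * Qq a' b' c' d' := by
  have dA : (5:ℤ) ∣ (2*a + b + c - 2*d) := by omega
  have dB : (5:ℤ) ∣ (a + 3*b - 2*c - d) := by omega
  have dC : (5:ℤ) ∣ (-a + 2*b + 2*c + d) := by omega
  have dD : (5:ℤ) ∣ (2*a + b + c + 3*d) := by omega
  obtain ⟨a', ha⟩ := dA
  obtain ⟨b', hb⟩ := dB
  obtain ⟨c', hc⟩ := dC
  obtain ⟨d', hd⟩ := dD
  refine ⟨a', b', c', d', ?_, ?_⟩
  -- first show the linear inversion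
  all_goals {
    have hA : a = a' - c' + d' := by omega
    have hB : b = b' + c' := by omega
    have hC : c = a' - b' + c' := by omega
    have hD : d = d' - a' := by omega
    have hw1 : zit a b c d = alphaG * zit a' b' c' d' := by
      rw [hA, hB, hC, hD]
      unfold zit alphaG
      push_cast
      linear_combination (Complex.I*(b':ℂ) + Complex.I^2*(d':ℂ)) * goldSq
        + ((d':ℂ) - c' + gold*c') * Complex.I_mul_I
    have hw2 : zitBar a b c d = alphaBarG * zitBar a' b' c' d' := by
      rw [hA, hB, hC, hD]
      unfold zitBar alphaBarG
      push_cast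
      linear_combination (Complex.I*(b':ℂ) + Complex.I^2*(d':ℂ)) * goldSq
        + ((d':ℂ) - gold*c') * Complex.I_mul_I
    have hN : (Pq a b c d : ℂ) + (Qq a b c d : ℂ) * Complex.I =
        ((2 * Pq a' b' c' d' - Qq a' b' c' d' : ℤ) : ℂ)
          + ((Pq a' b' c' d' + 2 * Qq a' b' c' d' : ℤ) : ℂ) * Complex.I := by
      rw [← zmul]
      rw [hw1, hw2]
      have : alphaG * zit a' b' c' d' * (alphaBarG * zitBar a' b' c' d')
          = (alphaG * alphaBarG) * (zit a' b' c' d' * zitBar a' b' c' d') := by ring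
      rw [this, alpha_mul, zmul]
      push_cast
      linear_combination ((Qq a' b' c' d' : ℂ)) * Complex.I_mul_I
    obtain ⟨e1, e2⟩ := int_complex_eq hN
    first
    | exact e1
    | exact e2 }

/-- Key anisotropy lemma: `det W = 0` forces `W = 0`, by infinite descent. -/
lemma key_lemma : ∀ n : ℕ, ∀ a b c d e f g h : ℤ,
    (Pq a b c d)^2 + (Qq a b c d)^2 ≤ (n : ℤ) →
    Pq a b c d + Qq e f g h = 0 → Qq a b c d - Pq e f g h = 0 →
    a = 0 ∧ b = 0 ∧ c = 0 ∧ d = 0 ∧ e = 0 ∧ f = 0 ∧ g = 0 ∧ h = 0 := by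
  intro n
  induction n with
  | zero =>
    intro a b c d e f g h hM h1 h2
    have hP : Pq a b c d = 0 ∧ Qq a b c d = 0 := by
      by_contra hc
      have := one_le_sq_add_sq hc
      simp at hM
      omega
    have hP2 : Pq e f g h = 0 := by omega
    have hQ2 : Qq e f g h = 0 := by omega
    obtain ⟨x1, x2, x3, x4⟩ := PQ_zero hP.1 hP.2
    obtain ⟨x5, x6, x7, x8⟩ := PQ_zero hP2 hQ2
    exact ⟨x1, x2, x3, x4, x5, x6, x7, x8⟩
  | succ n ih =>
    intro a b c d e f g h hM h1 h2
    by_cases hP : Pq a b c d = 0 ∧ Qq a b c d = 0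
    · have hP2 : Pq e f g h = 0 := by omega
      have hQ2 : Qq e f g h = 0 := by omega
      obtain ⟨x1, x2, x3, x4⟩ := PQ_zero hP.1 hP.2
      obtain ⟨x5, x6, x7, x8⟩ := PQ_zero hP2 hQ2
      exact ⟨x1, x2, x3, x4, x5, x6, x7, x8⟩
    · obtain ⟨hs1, hs2⟩ := mod5_step h1 h2
      obtain ⟨a', b', c', d', hP1, hQ1⟩ := alpha_descent hs1
      obtain ⟨e', f', g', h', hP2, hQ2'⟩ := alpha_descent hs2
      have hM1 : 1 ≤ (Pq a b c d)^2 + (Qq a b c d)^2 := one_le_sq_add_sq hP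
      have hMeq : (Pq a b c d)^2 + (Qq a b c d)^2
          = 5 * ((Pq a' b' c' d')^2 + (Qq a' b' c' d')^2) := by
        rw [hP1, hQ1]; ring
      have hM' : (Pq a' b' c' d')^2 + (Qq a' b' c' d')^2 ≤ (n : ℤ) := by
        have hcast : ((n + 1 : ℕ) : ℤ) = (n : ℤ) + 1 := by push_cast; ring
        omega
      have h1' : Pq a' b' c' d' + Qq e' f' g' h' = 0 := by
        linarith [h1, h2, hP1, hQ1, hP2, hQ2']
      have h2' : Qq a' b' c' d' - Pq e' f' g' h' = 0 := by
        linarith [h1, h2, hP1, hQ1, hP2, hQ2']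
      obtain ⟨x1, x2, x3, x4, x5, x6, x7, x8⟩ := ih a' b' c' d' e' f' g' h' hM' h1' h2'
      subst x1 x2 x3 x4 x5 x6 x7 x8
      -- then P' = Q' = 0, so original P,Q are zero, contradiction
      exfalso
      apply hP
      constructor <;> simp [Pq, Qq] at hP1 hQ1 ⊢ <;> omega

lemma det_Omat (a b c d e f g h : ℤ) :
    (Omat a b c d e f g h).det =
      ((Pq a b c d + Qq e f g h : ℤ) : ℂ)
        + ((Qq a b c d - Pq e f g h : ℤ) : ℂ) * Complex.I := by
  unfold Omat
  rw [Matrix.det_fin_two_of]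
  have : zit a b c d * zitBar a b c d - zit e f g h * (Complex.I * zitBar e f g h)
      = (zit a b c d * zitBar a b c d) - Complex.I * (zit e f g h * zitBar e f g h) := by ring
  rw [this, zmul, zmul]
  push_cast
  linear_combination (-(Qq e f g h : ℂ)) * Complex.I_mul_I

lemma absdet (a b c d e f g h : ℤ) :
    ‖(((Real.sqrt 5 : ℂ))⁻¹ • (Amat * Omat a b c d e f g h)).det‖ ^ 2
      = (((Pq a b c d + Qq e f g h)^2 + (Qq a b c d - Pq e f g h)^2 : ℤ) : ℝ) / 5 := by
  set D1 : ℤ := Pq a b c d + Qq e f g h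
  set D2 : ℤ := Qq a b c d - Pq e f g h
  have hdetA : Amat.det = 2 + Complex.I := by
    unfold Amat
    rw [Matrix.det_fin_two_of]
    rw [show alphaG * alphaBarG - 0 * 0 = alphaG * alphaBarG by ring, alpha_mul]
  have hdet : (((Real.sqrt 5 : ℂ))⁻¹ • (Amat * Omat a b c d e f g h)).det
      = ((Real.sqrt 5 : ℂ))⁻¹ ^ 2 * ((2 + Complex.I) * ((D1 : ℂ) + (D2 : ℂ) * Complex.I)) := by
    rw [Matrix.det_smul, Matrix.det_mul, hdetA, det_Omat]
    simp only [D1, D2, Fintype.card_fin]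
  rw [Complex.sq_norm, hdet, Complex.normSq_mul, Complex.normSq_mul]
  have e1 : Complex.normSq (((Real.sqrt 5 : ℂ))⁻¹ ^ 2) = 1 / 25 := by
    rw [map_pow, map_inv₀]
    have : Complex.normSq ((Real.sqrt 5 : ℂ)) = 5 := by
      rw [Complex.normSq_ofReal, Real.mul_self_sqrt (by norm_num : (0:ℝ) ≤ 5)]
    rw [this]; norm_num
  have e2 : Complex.normSq (2 + Complex.I) = 5 := by
    norm_num [Complex.normSq_apply]
  have e3 : Complex.normSq ((D1 : ℂ) + (D2 : ℂ) * Complex.I) = (D1:ℝ)^2 + (D2:ℝ)^2 := by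
    simp [Complex.normSq_apply]
    ring
  rw [e1, e2, e3]
  push_cast
  ring

/-- Every nonzero Golden codeword satisfies `|det X|² ≥ 1/5`, and the bound is
attained. -/
theorem min_det_golden :
    (∀ X : Matrix (Fin 2) (Fin 2) ℂ, inG X → X ≠ 0 → 1 / 5 ≤ ‖X.det‖ ^ 2) ∧
    (∃ X : Matrix (Fin 2) (Fin 2) ℂ, inG X ∧ X ≠ 0 ∧ ‖X.det‖ ^ 2 = 1 / 5) := by
  constructor
  · rintro X ⟨W, ⟨a, b, c, d, e, f, g, h, rfl⟩, rfl⟩ hne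
    by_cases hD : Pq a b c d + Qq e f g h = 0 ∧ Qq a b c d - Pq e f g h = 0
    · exfalso
      apply hne
      obtain ⟨x1, x2, x3, x4, x5, x6, x7, x8⟩ :=
        key_lemma ((Pq a b c d)^2 + (Qq a b c d)^2).toNat a b c d e f g h
          (by omega) hD.1 hD.2
      subst x1 x2 x3 x4 x5 x6 x7 x8
      have hz : zit 0 0 0 0 = 0 := by unfold zit; push_cast; ring
      have hzb : zitBar 0 0 0 0 = 0 := by unfold zitBar; push_cast; ring
      have hW : Omat 0 0 0 0 0 0 0 0 = 0 := by
        unfold Omat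
        rw [hz, hzb]
        ext i j
        fin_cases i <;> fin_cases j <;> simp
      rw [hW]
      simp
    · rw [absdet]
      have h1 : (1:ℤ) ≤ (Pq a b c d + Qq e f g h)^2 + (Qq a b c d - Pq e f g h)^2 :=
        one_le_sq_add_sq hD
      have h1R : (1:ℝ) ≤ (((Pq a b c d + Qq e f g h)^2 + (Qq a b c d - Pq e f g h)^2 : ℤ) : ℝ) := by
        exact_mod_cast h1
      linarith
  · refine ⟨((Real.sqrt 5 : ℂ))⁻¹ • (Amat * Omat 1 0 0 0 0 0 0 0),
      ⟨Omat 1 0 0 0 0 0 0 0, ⟨1, 0, 0, 0, 0, 0, 0, 0, rfl⟩, rfl⟩, ?_, ?_⟩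
    · -- nonzero: its determinant has |det|² = 1/5 ≠ 0
      intro h0
      have := absdet 1 0 0 0 0 0 0 0
      rw [h0] at this
      simp [Pq, Qq] at this
    · rw [absdet]
      simp [Pq, Qq]
end

section
/- The ideals 𝒢̄ = α𝒪 and (1+i)𝒪 are coprime in 𝒪, i.e. α𝒪 + (1+i)𝒪 = 𝒪, and consequently 𝒢̄/(1+i)𝒢̄ ≅ 𝒪/(1+i)𝒪 as rings. -/
open Matrix

/-- Membership in the integral ideal `𝒢̄ = α𝒪 = √5·𝒢`. -/
def inGbar (X : Matrix (Fin 2) (Fin 2) ℂ) : Prop := ∃ W, inO W ∧ X = Amat * W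

theorem goldC_sq : gold ^ 2 = gold + 1 := by
  have hs : (Real.sqrt 5 : ℂ) ^ 2 = 5 := by
    rw [← Complex.ofReal_pow, Real.sq_sqrt (by norm_num : (5:ℝ) ≥ 0)]; norm_num
  unfold gold
  linear_combination (1/4 : ℂ) * hs

set_option maxHeartbeats 2000000 in
theorem Omat_mul (a b c d e f h k a2 b2 c2 d2 e2 f2 h2 k2 : ℤ) :
    Omat a b c d e f h k * Omat a2 b2 c2 d2 e2 f2 h2 k2 =
    Omat (k*f2 + (-1)*h*f2 + (-1)*h*e2 + f*k2 + (-1)*e*k2 + (-1)*e*h2 + (-1)*d*d2 + (-1)*c*c2 + b*b2 + a*a2) ((-1)*k*e2 + h*f2 + (-1)*f*h2 + e*k2 + (-1)*d*d2 + (-1)*d*c2 + (-1)*c*d2 + b*b2 + b*a2 + a*b2) (k*k2 + (-1)*h*k2 + (-1)*h*h2 + (-1)*f*f2 + e*f2 + e*e2 + d*b2 + c*a2 + b*d2 + a*c2) ((-1)*k*h2 + h*k2 + f*e2 + (-1)*e*f2 + d*b2 + d*a2 + c*b2 + b*d2 + b*c2 + a*d2) (k*d2 + (-1)*h*d2 +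 (-1)*h*c2 + (-1)*f*b2 + e*b2 + e*a2 + (-1)*d*k2 + (-1)*c*h2 + b*f2 + a*e2) ((-1)*k*c2 + h*d2 + f*a2 + (-1)*e*b2 + (-1)*d*k2 + (-1)*d*h2 + (-1)*c*k2 + b*f2 + b*e2 + a*f2) ((-1)*k*b2 + h*b2 + h*a2 + (-1)*f*d2 + e*d2 + e*c2 + d*f2 + c*e2 + b*k2 + a*h2) (k*a2 + (-1)*h*b2 + f*c2 + (-1)*e*d2 + d*f2 + d*e2 + c*f2 + b*k2 + b*h2 + a*k2) := by
  have hg : gold^2 = gold + 1 := goldC_sq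
  have hI : Complex.I^2 = -1 := Complex.I_sq
  ext i j
  fin_cases i <;> fin_cases j <;>
    simp [Omat, Matrix.mul_apply, Fin.sum_univ_two, zit, zitBar]
  · linear_combination ((k:ℂ)*(k2:ℂ)*Complex.I + (k:ℂ)*(f2:ℂ) + (f:ℂ)*(k2:ℂ) + (-1)*(f:ℂ)*(f2:ℂ)*Complex.I + (-1)*(d:ℂ)*(d2:ℂ) + (d:ℂ)*(b2:ℂ)*Complex.I + (b:ℂ)*(d2:ℂ)*Complex.I + (b:ℂ)*(b2:ℂ)) * hg + ((k:ℂ)*(k2:ℂ)*gold*Complex.I + (-1)*(k:ℂ)*(k2:ℂ)*gold*gold*Complex.I + (k:ℂ)*(h2:ℂ)*gold*Complex.I + (k:ℂ)*(f2:ℂ)*gold + (-1)*(k:ℂ)*(f2:ℂ)*gold*gold + (k:ℂ)*(e2:ℂ)*gold + (h:ℂ)*(k2:ℂ)*Complex.I + (-1)*(h:ℂ)*(k2:ℂ)*gold*Complex.I + (h:ℂ)*(h2:ℂ)*Complex.I + (h:ℂ)*(f2:ℂ) + (-1)*(h:ℂ)*(f2:ℂ)*gold + (h:ℂ)*(e2:ℂ)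 + (f:ℂ)*(k2:ℂ)*gold + (-1)*(f:ℂ)*(k2:ℂ)*gold*gold + (f:ℂ)*(h2:ℂ)*gold + (e:ℂ)*(k2:ℂ) + (-1)*(e:ℂ)*(k2:ℂ)*gold + (e:ℂ)*(h2:ℂ) + (d:ℂ)*(d2:ℂ)*gold*gold + (d:ℂ)*(c2:ℂ)*gold + (c:ℂ)*(d2:ℂ)*gold + (c:ℂ)*(c2:ℂ)) * hI
  · linear_combination ((k:ℂ)*(d2:ℂ) + (-1)*(k:ℂ)*(b2:ℂ)*Complex.I + (-1)*(f:ℂ)*(d2:ℂ)*Complex.I + (-1)*(f:ℂ)*(b2:ℂ) + (-1)*(d:ℂ)*(k2:ℂ) + (d:ℂ)*(f2:ℂ)*Complex.I + (b:ℂ)*(k2:ℂ)*Complex.I + (b:ℂ)*(f2:ℂ)) * hg + ((k:ℂ)*(d2:ℂ)*gold + (-1)*(k:ℂ)*(d2:ℂ)*gold*gold + (k:ℂ)*(c2:ℂ)*gold + (h:ℂ)*(d2:ℂ) + (-1)*(h:ℂ)*(d2:ℂ)*gold + (h:ℂ)*(c2:ℂ) + (d:ℂ)*(k2:ℂ)*gold*gold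 + (d:ℂ)*(h2:ℂ)*gold + (c:ℂ)*(k2:ℂ)*gold + (c:ℂ)*(h2:ℂ)) * hI
  · linear_combination ((k:ℂ)*(d2:ℂ)*Complex.I + (k:ℂ)*(b2:ℂ) + (f:ℂ)*(d2:ℂ) + (-1)*(f:ℂ)*(b2:ℂ)*Complex.I + (-1)*(d:ℂ)*(k2:ℂ)*Complex.I + (-1)*(d:ℂ)*(f2:ℂ) + (-1)*(b:ℂ)*(k2:ℂ) + (b:ℂ)*(f2:ℂ)*Complex.I) * hg + ((k:ℂ)*(d2:ℂ)*gold*Complex.I + (-1)*(k:ℂ)*(d2:ℂ)*gold*gold*Complex.I + (k:ℂ)*(c2:ℂ)*Complex.I + (-1)*(k:ℂ)*(c2:ℂ)*gold*Complex.I + (k:ℂ)*(b2:ℂ) + (k:ℂ)*(b2:ℂ)*gold + (-1)*(k:ℂ)*(b2:ℂ)*gold*gold + (h:ℂ)*(d2:ℂ)*gold*Complex.I + (h:ℂ)*(c2:ℂ)*Complex.I + (f:ℂ)*(d2:ℂ) + (f:ℂ)*(d2:ℂ)*gold + (-1)*(f:ℂ)*(d2:ℂ)*gold*gold + (d:ℂ)*(k2:ℂ)*Complex.I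 + (-2)*(d:ℂ)*(k2:ℂ)*gold*Complex.I + (d:ℂ)*(k2:ℂ)*gold*gold*Complex.I + (d:ℂ)*(h2:ℂ)*Complex.I + (-1)*(d:ℂ)*(h2:ℂ)*gold*Complex.I + (-1)*(d:ℂ)*(f2:ℂ) + (-1)*(d:ℂ)*(f2:ℂ)*gold + (d:ℂ)*(f2:ℂ)*gold*gold + (c:ℂ)*(k2:ℂ)*Complex.I + (-1)*(c:ℂ)*(k2:ℂ)*gold*Complex.I + (c:ℂ)*(h2:ℂ)*Complex.I + (-1)*(b:ℂ)*(k2:ℂ) + (-1)*(b:ℂ)*(k2:ℂ)*gold + (b:ℂ)*(k2:ℂ)*gold*gold) * hI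
  · linear_combination ((k:ℂ)*(k2:ℂ)*Complex.I + (k:ℂ)*(f2:ℂ) + (f:ℂ)*(k2:ℂ) + (-1)*(f:ℂ)*(f2:ℂ)*Complex.I + (-1)*(d:ℂ)*(d2:ℂ) + (d:ℂ)*(b2:ℂ)*Complex.I + (b:ℂ)*(d2:ℂ)*Complex.I + (b:ℂ)*(b2:ℂ)) * hg + ((k:ℂ)*(k2:ℂ)*gold*Complex.I + (-1)*(k:ℂ)*(k2:ℂ)*gold*gold*Complex.I + (k:ℂ)*(h2:ℂ)*Complex.I + (-1)*(k:ℂ)*(h2:ℂ)*gold*Complex.I + (k:ℂ)*(f2:ℂ)*gold + (-1)*(k:ℂ)*(f2:ℂ)*gold*gold + (k:ℂ)*(e2:ℂ) + (-1)*(k:ℂ)*(e2:ℂ)*gold + (h:ℂ)*(k2:ℂ)*gold*Complex.I + (h:ℂ)*(h2:ℂ)*Complex.I + (h:ℂ)*(f2:ℂ)*gold + (h:ℂ)*(e2:ℂ) + (f:ℂ)*(k2:ℂ)*gold + (-1)*(f:ℂ)*(k2:ℂ)*gold*gold + (f:ℂ)*(h2:ℂ) + (-1)*(f:ℂ)*(h2:ℂ)*gold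 + (e:ℂ)*(k2:ℂ)*gold + (e:ℂ)*(h2:ℂ) + (d:ℂ)*(d2:ℂ) + (-2)*(d:ℂ)*(d2:ℂ)*gold + (d:ℂ)*(d2:ℂ)*gold*gold + (d:ℂ)*(c2:ℂ) + (-1)*(d:ℂ)*(c2:ℂ)*gold + (c:ℂ)*(d2:ℂ) + (-1)*(c:ℂ)*(d2:ℂ)*gold + (c:ℂ)*(c2:ℂ)) * hI

theorem Omat_add (a b c d e f h k a2 b2 c2 d2 e2 f2 h2 k2 : ℤ) :
    Omat a b c d e f h k + Omat a2 b2 c2 d2 e2 f2 h2 k2 =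
    Omat (a+a2) (b+b2) (c+c2) (d+d2) (e+e2) (f+f2) (h+h2) (k+k2) := by
  ext i j
  fin_cases i <;> fin_cases j <;>
    simp [Omat, zit, zitBar] <;> push_cast <;> ring

theorem inO_mul {W W' : Matrix (Fin 2) (Fin 2) ℂ} (hW : inO W) (hW' : inO W') :
    inO (W * W') := by
  obtain ⟨a, b, c, d, e, f, h, k, rfl⟩ := hW
  obtain ⟨a2, b2, c2, d2, e2, f2, h2, k2, rfl⟩ := hW'
  exact ⟨_, _, _, _, _, _, _, _, Omat_mul a b c d e f h k a2 b2 c2 d2 e2 f2 h2 k2⟩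

theorem inO_add {W W' : Matrix (Fin 2) (Fin 2) ℂ} (hW : inO W) (hW' : inO W') :
    inO (W + W') := by
  obtain ⟨a, b, c, d, e, f, h, k, rfl⟩ := hW
  obtain ⟨a2, b2, c2, d2, e2, f2, h2, k2, rfl⟩ := hW'
  exact ⟨_, _, _, _, _, _, _, _, Omat_add a b c d e f h k a2 b2 c2 d2 e2 f2 h2 k2⟩

theorem scalar_eq (p q : ℤ) :
    ((p : ℂ) + q * Complex.I) • (1 : Matrix (Fin 2) (Fin 2) ℂ) = Omat p 0 q 0 0 0 0 0 := by
  ext i j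
  fin_cases i <;> fin_cases j <;>
    simp [Omat, Matrix.one_apply, zit, zitBar] <;> ring

theorem inO_zsmul (p q : ℤ) {W : Matrix (Fin 2) (Fin 2) ℂ} (hW : inO W) :
    inO (((p : ℂ) + q * Complex.I) • W) := by
  have h1 : ((p : ℂ) + q * Complex.I) • W = Omat p 0 q 0 0 0 0 0 * W := by
    rw [← scalar_eq, smul_mul_assoc, one_mul]
  rw [h1]
  exact inO_mul ⟨_, _, _, _, _, _, _, _, rfl⟩ hW

theorem inO_csmul {z : ℂ} (p q : ℤ) (hz : z = (p : ℂ) + q * Complex.I)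
    {W : Matrix (Fin 2) (Fin 2) ℂ} (hW : inO W) : inO (z • W) := by
  rw [hz]; exact inO_zsmul p q hW

theorem Amat_eq : Amat = Omat 1 0 1 (-1) 0 0 0 0 := by
  ext i j
  fin_cases i <;> fin_cases j <;>
    simp [Amat, Omat, alphaG, alphaBarG, zit, zitBar] <;> ring

theorem inO_Amat : inO Amat := ⟨_, _, _, _, _, _, _, _, Amat_eq⟩

/-- `Ā = diag(ᾱ, α)`, as an element of `𝒪`. -/
noncomputable def Abar : Matrix (Fin 2) (Fin 2) ℂ := Omat 1 0 0 1 0 0 0 0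

theorem inO_Abar : inO Abar := ⟨_, _, _, _, _, _, _, _, rfl⟩

theorem Amat_mul_Abar : Amat * Abar = ((2 : ℂ) + Complex.I) • 1 := by
  have h := Omat_mul 1 0 1 (-1) 0 0 0 0 1 0 0 1 0 0 0 0
  norm_num at h
  rw [Amat_eq, Abar, h, ← scalar_eq 2 1]
  norm_num

theorem Abar_mul_Amat : Abar * Amat = ((2 : ℂ) + Complex.I) • 1 := by
  have h := Omat_mul 1 0 0 1 0 0 0 0 1 0 1 (-1) 0 0 0 0
  norm_num at h
  rw [Amat_eq, Abar, h, ← scalar_eq 2 1]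
  norm_num

/-- The ideals `𝒢̄ = α𝒪` and `(1+i)𝒪` are coprime: `α𝒪 + (1+i)𝒪 = 𝒪`.
Consequently `𝒢̄/(1+i)𝒢̄ ≅ 𝒪/(1+i)𝒪`: the natural map `𝒢̄ → 𝒪/(1+i)𝒪` is
surjective and its kernel is `(1+i)𝒢̄`. -/
theorem Gbar_coprime_one_add_i :
    (∀ Z, inO Z ↔ ∃ X W, inGbar X ∧ inO W ∧ Z = X + (1 + Complex.I) • W) ∧
    (∀ Z, inO Z → ∃ X, inGbar X ∧ ∃ W, inO W ∧ Z - X = (1 + Complex.I) • W) ∧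
    (∀ X, inGbar X →
      ((∃ W, inO W ∧ X = (1 + Complex.I) • W) ↔
       (∃ Y, inGbar Y ∧ X = (1 + Complex.I) • Y))) := by
  have main : ∀ Z : Matrix (Fin 2) (Fin 2) ℂ,
      Z - Amat * (Abar * Z) = (1 + Complex.I) • ((-1 : ℂ) • Z) := by
    intro Z
    rw [← Matrix.mul_assoc, Amat_mul_Abar, smul_mul_assoc, one_mul]
    ext i j
    simp only [Matrix.sub_apply, Matrix.smul_apply, smul_eq_mul]
    ring
  have gbarAZ : ∀ Z, inO Z → inGbar (Amat * (Abar * Z)) := fun Z hZ =>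
    ⟨Abar * Z, inO_mul inO_Abar hZ, rfl⟩
  refine ⟨?_, ?_, ?_⟩
  · intro Z
    constructor
    · intro hZ
      refine ⟨Amat * (Abar * Z), (-1 : ℂ) • Z, gbarAZ Z hZ,
        inO_csmul (-1) 0 (by push_cast; ring) hZ, ?_⟩
      have h := main Z
      rw [← h]; abel
    · rintro ⟨X, W, ⟨W0, hW0, rfl⟩, hW, rfl⟩
      exact inO_add (inO_mul inO_Amat hW0) (inO_csmul 1 1 (by push_cast; ring) hW)
  · intro Z hZ
    exact ⟨Amat * (Abar * Z), gbarAZ Z hZ, (-1 : ℂ) • Z,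
      inO_csmul (-1) 0 (by push_cast; ring) hZ, main Z⟩
  · rintro X ⟨W0, hW0, rfl⟩
    constructor
    · rintro ⟨W, hW, hXW⟩
      have key : ((2 : ℂ) + Complex.I) • W0 = (1 + Complex.I) • (Abar * W) := by
        calc ((2 : ℂ) + Complex.I) • W0 = (((2 : ℂ) + Complex.I) • 1) * W0 := by
              rw [smul_mul_assoc, one_mul]
          _ = Abar * (Amat * W0) := by rw [← Abar_mul_Amat, Matrix.mul_assoc]
          _ = Abar * ((1 + Complex.I) • W) := by rw [hXW]
          _ = (1 + Complex.I) • (Abar * W) := by rw [Matrix.mul_smul]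
      set V : Matrix (Fin 2) (Fin 2) ℂ := Abar * W + ((-1 : ℂ) + Complex.I) • W0 with hV
      have hVO : inO V :=
        inO_add (inO_mul inO_Abar hW) (inO_csmul (-1) 1 (by push_cast; ring) hW0)
      have hIV : (1 + Complex.I) • V = Complex.I • W0 := by
        rw [hV, smul_add, ← key, smul_smul, ← add_smul]
        congr 1
        linear_combination Complex.I_sq
      have e1 : (-Complex.I) * (1 + Complex.I) = 1 - Complex.I := by
        linear_combination -Complex.I_sq
      have e2 : (-Complex.I) * Complex.I = 1 := by
        linear_combination -Complex.I_sq
      have hW0V : W0 = ((1 : ℂ) - Complex.I) • V := by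
        calc W0 = (-Complex.I) • (Complex.I • W0) := by rw [smul_smul, e2, one_smul]
          _ = (-Complex.I) • ((1 + Complex.I) • V) := by rw [hIV]
          _ = ((1 : ℂ) - Complex.I) • V := by rw [smul_smul, e1]
      refine ⟨Amat * ((-Complex.I) • V),
        ⟨(-Complex.I) • V, inO_csmul 0 (-1) (by push_cast; ring) hVO, rfl⟩, ?_⟩
      rw [Matrix.mul_smul, smul_smul, hW0V, Matrix.mul_smul]
      congr 1
      linear_combination Complex.I_sq
    · rintro ⟨Y, ⟨W', hW', rfl⟩, hXY⟩
      exact ⟨Amat * W', inO_mul inO_Amat hW', hXY⟩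
end
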